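/- There exists a constant K ≥ 1 and a neighborhood of the origin in ℝ³ on which the function G(ξ,y,z) = (4 e^{2λy}/λ⁴)[(cosh(λy) - cos(λξ))² + ((sinh(λy)/y)(-ξ+λz) + sin(λξ))²] satisfies K⁻¹ ((ξ² + y²)² + 4z²) ≤ G(ξ,y,z) ≤ K ((ξ² + y²)² + 4z²). -/

import Mathlib

open Real

/-- `sinh(λy)/y`, interpreted by its continuous extension `λ` at `y = 0`. -/
noncomputable def shc (lam y : ℝ) : ℝ := if y = 0 then lam else sinh (lam * y) / y

/-- The function `G(ξ,y,z) = (4 e^{2λy}/λ⁴)[(cosh(λy)-cos(λξ))²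
+ ((sinh(λy)/y)(-ξ+λz) + sin(λξ))²]`. -/
noncomputable def Gfun (lam : ℝ) (p : ℝ × ℝ × ℝ) : ℝ :=
  (4 * exp (2 * lam * p.2.1) / lam ^ 4) *
    ((cosh (lam * p.2.1) - cos (lam * p.1)) ^ 2
      + (shc lam p.2.1 * (-p.1 + lam * p.2.2) + sin (lam * p.1)) ^ 2)

lemma sinh_taylor {x : ℝ} (hx : |x| ≤ 1) : |Real.sinh x - x| ≤ |x|^3 := by
  have h1 := Real.exp_bound hx (n := 3) (by norm_num)
  have h2 := Real.exp_bound (x := -x) (by rwa [abs_neg]) (n := 3) (by norm_num)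
  simp [Finset.sum_range_succ, Nat.factorial, abs_neg] at h1 h2
  rw [Real.sinh_eq]
  rw [abs_le] at h1 h2 ⊢
  constructor <;> nlinarith [h1.1, h1.2, h2.1, h2.2, abs_nonneg x, pow_nonneg (abs_nonneg x) 3]

lemma cosh_taylor {x : ℝ} (hx : |x| ≤ 1) : |Real.cosh x - (1 + x^2/2)| ≤ |x|^3 := by
  have h1 := Real.exp_bound hx (n := 3) (by norm_num)
  have h2 := Real.exp_bound (x := -x) (by rwa [abs_neg]) (n := 3) (by norm_num)
  simp [Finset.sum_range_succ, Nat.factorial, abs_neg] at h1 h2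
  rw [Real.cosh_eq]
  rw [abs_le] at h1 h2 ⊢
  constructor <;> nlinarith [h1.1, h1.2, h2.1, h2.2, abs_nonneg x, pow_nonneg (abs_nonneg x) 3]

lemma sin_taylor {x : ℝ} (hx : |x| ≤ 1) : |Real.sin x - x| ≤ |x|^3 := by
  have h := Real.sin_bound hx
  rw [abs_le] at h ⊢
  have h4 : |x|^4 ≤ |x|^3 := pow_le_pow_of_le_one (abs_nonneg x) hx (by norm_num)
  have h5 : |x|^5 ≤ |x|^3 := pow_le_pow_of_le_one (abs_nonneg x) hx (by norm_num)
  constructor <;> nlinarith [h.1, h.2, neg_abs_le (x^3), le_abs_self (x^3), abs_pow x 3,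
    pow_nonneg (abs_nonneg x) 3, h5]

lemma cos_taylor {x : ℝ} (hx : |x| ≤ 1) : |Real.cos x - (1 - x^2/2)| ≤ |x|^3 := by
  have h := Real.cos_bound hx
  have h4 : |x|^4 ≤ |x|^3 := pow_le_pow_of_le_one (abs_nonneg x) hx (by norm_num)
  calc |Real.cos x - (1 - x^2/2)| ≤ |x|^4 * (5/96) := h
    _ ≤ |x|^3 := by nlinarith [pow_nonneg (abs_nonneg x) 4]

lemma shc_est (lam : ℝ) {y : ℝ} (hy : |lam * y| ≤ 1) : |shc lam y - lam| ≤ |lam|^3 * y^2 := by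
  unfold shc
  split_ifs with h
  · simp [h]
  · have hyp : 0 < |y| := abs_pos.mpr h
    have h1 : sinh (lam*y)/y - lam = (sinh (lam*y) - lam*y)/y := by field_simp
    rw [h1, abs_div, div_le_iff₀ hyp]
    calc |sinh (lam*y) - lam*y| ≤ |lam*y|^3 := sinh_taylor hy
      _ = |lam|^3 * (y^2 * |y|) := by
          rw [abs_mul, mul_pow, show |y|^3 = |y|^2 * |y| by ring, sq_abs]
      _ = |lam|^3 * y^2 * |y| := by ring

set_option maxHeartbeats 1000000 in
/-- Two-sided comparison of `G` with the fourth power of the homogeneous gauge: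
there are `K ≥ 1` and a neighborhood of the origin on which
`K⁻¹((ξ²+y²)² + 4z²) ≤ G(ξ,y,z) ≤ K((ξ²+y²)² + 4z²)`. -/
theorem Gfun_comparable (lam : ℝ) (hlam : lam ≠ 0) :
    ∃ K : ℝ, 1 ≤ K ∧ ∃ ε > (0 : ℝ), ∀ ξ y z : ℝ,
      |ξ| < ε → |y| < ε → |z| < ε →
        K⁻¹ * ((ξ ^ 2 + y ^ 2) ^ 2 + 4 * z ^ 2) ≤ Gfun lam (ξ, y, z) ∧
        Gfun lam (ξ, y, z) ≤ K * ((ξ ^ 2 + y ^ 2) ^ 2 + 4 * z ^ 2) := by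
  have hlampos : (0:ℝ) < |lam| := abs_pos.mpr hlam
  refine ⟨100, by norm_num, 1/(6*(1+|lam|)), by positivity, ?_⟩
  intro ξ y z hξ hy hz
  have hl4 : (0:ℝ) < lam^4 := by positivity
  have habs : ∀ u : ℝ, |u| < 1/(6*(1+|lam|)) → |lam * u| ≤ 1/6 := by
    intro u hu
    rw [abs_mul]
    have h1 : |lam| * |u| ≤ |lam| * (1/(6*(1+|lam|))) :=
      mul_le_mul_of_nonneg_left hu.le (abs_nonneg lam)
    have h2 : |lam| * (1/(6*(1+|lam|))) ≤ 1/6 := by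
      rw [show |lam| * (1/(6*(1+|lam|))) = |lam| / (6*(1+|lam|)) by ring,
        div_le_iff₀ (by positivity)]
      nlinarith
    linarith
  have hs6 : |lam * ξ| ≤ 1/6 := habs ξ hξ
  have ht6 : |lam * y| ≤ 1/6 := habs y hy
  have hs1 : |lam * ξ| ≤ 1 := le_trans hs6 (by norm_num)
  have ht1 : |lam * y| ≤ 1 := le_trans ht6 (by norm_num)
  -- cube bounds
  have hscube : |lam*ξ|^3 ≤ (1/6) * (lam*ξ)^2 := by
    rw [show |lam*ξ|^3 = |lam*ξ| * |lam*ξ|^2 by ring, sq_abs]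
    exact mul_le_mul_of_nonneg_right hs6 (sq_nonneg _)
  have htcube : |lam*y|^3 ≤ (1/6) * (lam*y)^2 := by
    rw [show |lam*y|^3 = |lam*y| * |lam*y|^2 by ring, sq_abs]
    exact mul_le_mul_of_nonneg_right ht6 (sq_nonneg _)
  -- Taylor estimates
  have hEc := cosh_taylor ht1
  have hEo := cos_taylor hs1
  have hEs := sin_taylor hs1
  have hsh := shc_est lam ht1
  -- rewrite Gfun
  have hGeq : Gfun lam (ξ, y, z) = (4 * Real.exp (2*(lam*y)) / lam^4) *
      ((Real.cosh (lam*y) - Real.cos (lam*ξ))^2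
        + ((shc lam y * lam)*z + (Real.sin (lam*ξ) - shc lam y * ξ))^2) := by
    simp only [Gfun]
    ring_nf
  rw [hGeq]
  set w := shc lam y with hw_def
  set A := Real.cosh (lam*y) - Real.cos (lam*ξ) with hA_def
  set D := Real.sin (lam*ξ) - w * ξ with hD_def
  set B := (w*lam)*z + D with hB_def
  set r2 := ξ^2 + y^2 with hr2_def
  clear_value w A D B r2
  -- A bounds
  rw [abs_le] at hEc hEo
  have hr2nn : (0:ℝ) ≤ r2 := by rw [hr2_def]; positivity
  have hA1 : ((lam*y)^2+(lam*ξ)^2)/3 ≤ A := by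
    rw [hA_def]; linarith [hEc.1, hEo.2, hscube, htcube]
  have hA2 : A ≤ (2/3)*((lam*y)^2+(lam*ξ)^2) := by
    rw [hA_def]; linarith [hEc.2, hEo.1, hscube, htcube]
  have hAnn : 0 ≤ A := le_trans (by positivity) hA1
  have hts : (lam*y)^2 + (lam*ξ)^2 = lam^2 * r2 := by rw [hr2_def]; ring
  rw [hts] at hA1 hA2
  have hA1sq : lam^4*r2^2/9 ≤ A^2 := by
    have h := pow_le_pow_left₀ (by positivity : (0:ℝ) ≤ lam^2*r2/3) hA1 2
    calc lam^4*r2^2/9 = (lam^2*r2/3)^2 := by ring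
      _ ≤ A^2 := h
  have hA2sq : A^2 ≤ (4/9)*(lam^4*r2^2) := by
    have h := pow_le_pow_left₀ hAnn hA2 2
    calc A^2 ≤ ((2/3)*(lam^2*r2))^2 := h
      _ = (4/9)*(lam^4*r2^2) := by ring
  -- D bounds
  have hD_abs : |D| ≤ |lam|^3 * |ξ| * r2 := by
    have e1 : D = (Real.sin (lam*ξ) - lam*ξ) + (lam - w)*ξ := by rw [hD_def]; ring
    calc |D| ≤ |Real.sin (lam*ξ) - lam*ξ| + |(lam - w)*ξ| := by rw [e1]; exact abs_add_le _ _
      _ ≤ |lam*ξ|^3 + (|lam|^3*y^2) * |ξ| := by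
          rw [abs_mul]
          have h2 : |lam - w| ≤ |lam|^3*y^2 := by rw [abs_sub_comm]; exact hsh
          exact add_le_add hEs (mul_le_mul_of_nonneg_right h2 (abs_nonneg ξ))
      _ = |lam|^3 * |ξ| * r2 := by
          rw [hr2_def, abs_mul, show (|lam| * |ξ|)^3 = |lam|^3 * (|ξ|^2*|ξ|) by ring, sq_abs]
          ring
  have hD2 : D^2 ≤ (1/36) * (lam^4 * r2^2) := by
    have h1 : D^2 ≤ (|lam|^3 * |ξ| * r2)^2 := by
      rw [← sq_abs D]
      exact pow_le_pow_left₀ (abs_nonneg D) hD_abs 2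
    have h2 : (|lam|^3 * |ξ| * r2)^2 = (lam^2*ξ^2) * (lam^4 * r2^2) := by
      rw [show (|lam|^3 * |ξ| * r2)^2 = (|lam|^2)^3 * |ξ|^2 * r2^2 by ring, sq_abs, sq_abs]
      ring
    have h3 : lam^2 * ξ^2 ≤ 1/36 := by
      have h := pow_le_pow_left₀ (abs_nonneg (lam*ξ)) hs6 2
      rw [sq_abs, mul_pow] at h; linarith [h.trans_eq (by norm_num : ((1:ℝ)/6)^2 = 1/36)]
    calc D^2 ≤ (|lam|^3 * |ξ| * r2)^2 := h1
      _ = (lam^2*ξ^2) * (lam^4 * r2^2) := h2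
      _ ≤ (1/36) * (lam^4 * r2^2) := mul_le_mul_of_nonneg_right h3 (by positivity)
  -- w*lam bounds
  have hy36 : lam^2 * y^2 ≤ 1/36 := by
    have h := pow_le_pow_left₀ (abs_nonneg (lam*y)) ht6 2
    rw [sq_abs, mul_pow] at h; linarith [h.trans_eq (by norm_num : ((1:ℝ)/6)^2 = 1/36)]
  have hwl : |w*lam - lam^2| ≤ (1/36)*lam^2 := by
    rw [show w*lam - lam^2 = (w - lam)*lam by ring, abs_mul]
    calc |w - lam| * |lam| ≤ (|lam|^3*y^2) * |lam| :=
          mul_le_mul_of_nonneg_right hsh (abs_nonneg lam)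
      _ = (lam^2*y^2) * lam^2 := by
          rw [show |lam|^3*y^2*|lam| = (|lam|^2)^2*y^2 by ring, sq_abs]; ring
      _ ≤ (1/36)*lam^2 := mul_le_mul_of_nonneg_right hy36 (sq_nonneg lam)
  obtain ⟨hwl1, hwl2⟩ := abs_le.mp hwl
  have hwz_low : (35/36)^2*(lam^4*z^2) ≤ ((w*lam)*z)^2 := by
    have h1 : ((35/36)*lam^2)^2 ≤ (w*lam)^2 :=
      pow_le_pow_left₀ (by positivity) (by linarith) 2
    calc (35/36)^2*(lam^4*z^2) = ((35/36)*lam^2)^2 * z^2 := by ring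
      _ ≤ (w*lam)^2 * z^2 := mul_le_mul_of_nonneg_right h1 (sq_nonneg z)
      _ = ((w*lam)*z)^2 := by ring
  have hwz_up : ((w*lam)*z)^2 ≤ (37/36)^2*(lam^4*z^2) := by
    have h0 : 0 ≤ w*lam := by linarith [sq_nonneg lam]
    have h1 : (w*lam)^2 ≤ ((37/36)*lam^2)^2 := pow_le_pow_left₀ h0 (by linarith) 2
    calc ((w*lam)*z)^2 = (w*lam)^2*z^2 := by ring
      _ ≤ ((37/36)*lam^2)^2*z^2 := mul_le_mul_of_nonneg_right h1 (sq_nonneg z)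
      _ = (37/36)^2*(lam^4*z^2) := by ring
  have hBsq_low : ((w*lam)*z)^2/2 - D^2 ≤ B^2 := by
    rw [hB_def]; linarith [sq_nonneg ((w*lam)*z + 2*D)]
  have hBsq_up : B^2 ≤ 2*((w*lam)*z)^2 + 2*D^2 := by
    rw [hB_def]; linarith [sq_nonneg ((w*lam)*z - D)]
  have hlr : (0:ℝ) ≤ lam^4*r2^2 := by positivity
  have hlz : (0:ℝ) ≤ lam^4*z^2 := by positivity
  have hsum_low : (lam^4/16)*(r2^2 + 4*z^2) ≤ A^2 + B^2 := by
    linarith [hA1sq, hBsq_low, hwz_low, hD2, hlr, hlz]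
  have hsum_up : A^2 + B^2 ≤ lam^4*(r2^2 + 4*z^2) := by
    linarith [hA2sq, hBsq_up, hwz_up, hD2, hlr, hlz]
  have hQnn : (0:ℝ) ≤ r2^2 + 4*z^2 := by positivity
  have ht66 := abs_le.mp ht6
  have he1 : (2:ℝ)/3 ≤ Real.exp (2*(lam*y)) := by
    have h := Real.add_one_le_exp (2*(lam*y)); linarith
  have he2 : Real.exp (2*(lam*y)) ≤ 3/2 := by
    have h1 := Real.add_one_le_exp (-(2*(lam*y)))
    have h2 : Real.exp (2*(lam*y)) * Real.exp (-(2*(lam*y))) = 1 := by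
      rw [← Real.exp_add]; simp
    have h3 := mul_le_mul_of_nonneg_left h1 (Real.exp_pos (2*(lam*y))).le
    rw [h2] at h3
    have h4 := mul_le_mul_of_nonneg_left ht66.2 (Real.exp_pos (2*(lam*y))).le
    linarith
  have hAB_nn : (0:ℝ) ≤ A^2 + B^2 := by positivity
  have hQL : (0:ℝ) ≤ (r2^2 + 4*z^2) * lam^4 := mul_nonneg hQnn hl4.le
  constructor
  · rw [div_mul_eq_mul_div, le_div_iff₀ hl4]
    have hm := mul_le_mul he1 hsum_low (by positivity) (Real.exp_nonneg _)
    linarith [hQL, hm]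
  · rw [div_mul_eq_mul_div, div_le_iff₀ hl4]
    have hm := mul_le_mul he2 hsum_up hAB_nn (by norm_num)
    linarith [hQL, hm]
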